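/- arXiv:1211.0783 — 2 statements merged into one kernel-verified Lean document; each statement's English description precedes it below -/
import Mathlib

section
/- For all k, n, λ ≥ 1 and every i with 1 ≤ i ≤ λ, it holds that T^k_{(n+λ, n+i)} ≥ (λ + 1 − i)^{k−1} / ((n+λ)^k · (k−1)!). -/
/-- The Cesàro operator on real sequences (indexed from 1; index 0 is unused):
`[T(a)]_n = (a_1 + ⋯ + a_n)/n`. -/
noncomputable def cesaro (a : ℕ → ℝ) : ℕ → ℝ :=
  fun n => (∑ i ∈ Finset.Icc 1 n, a i) / n

/-- The matrix entry `T^k_{(n,m)} = [T^k(e_m)]_n` where `e_m` is the sequence whose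
`m`-th term is `1` and all other terms are `0`. -/
noncomputable def cesaroEntry (k n m : ℕ) : ℝ :=
  (cesaro^[k] (fun i => if i = m then (1 : ℝ) else 0)) n

lemma cesaro_nonneg {a : ℕ → ℝ} (ha : ∀ i, 0 ≤ a i) (n : ℕ) : 0 ≤ cesaro a n :=
  div_nonneg (Finset.sum_nonneg fun i _ => ha i) (Nat.cast_nonneg n)

lemma cesaro_iter_nonneg {a : ℕ → ℝ} (ha : ∀ i, 0 ≤ a i) (k n : ℕ) :
    0 ≤ (cesaro^[k] a) n := by
  induction k generalizing n with
  | zero => exact ha n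
  | succ k ih =>
    rw [Function.iterate_succ_apply']
    exact cesaro_nonneg (fun i => ih i) n

lemma pow_succ_sub_pow_succ_le (a b : ℝ) (ha : 0 ≤ a) (hab : a ≤ b) (n : ℕ) :
    b ^ (n+1) - a ^ (n+1) ≤ (n+1) * b ^ n * (b - a) := by
  have hb : 0 ≤ b := ha.trans hab
  have h := geom_sum₂_mul b a (n+1)
  rw [← h]
  have hsum : ∑ i ∈ Finset.range (n+1), b ^ i * a ^ (n + 1 - 1 - i) ≤ (n+1) * b ^ n := by
    calc ∑ i ∈ Finset.range (n+1), b ^ i * a ^ (n + 1 - 1 - i)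
        ≤ ∑ _i ∈ Finset.range (n+1), b ^ n := by
          apply Finset.sum_le_sum
          intro i hi
          have hin : i ≤ n := Nat.lt_succ_iff.mp (Finset.mem_range.mp hi)
          calc b ^ i * a ^ (n + 1 - 1 - i) ≤ b ^ i * b ^ (n - i) := by
                have : n + 1 - 1 - i = n - i := by omega
                rw [this]
                exact mul_le_mul_of_nonneg_left (pow_le_pow_left₀ ha hab _) (pow_nonneg hb _)
            _ = b ^ (i + (n - i)) := (pow_add b i (n-i)).symm
            _ = b ^ n := by rw [Nat.add_sub_cancel' hin]
      _ = (n+1) * b ^ n := by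
          rw [Finset.sum_const, Finset.card_range, nsmul_eq_mul]; push_cast; ring
  calc (∑ i ∈ Finset.range (n+1), b ^ i * a ^ (n + 1 - 1 - i)) * (b - a)
      ≤ ((n+1) * b ^ n) * (b - a) :=
        mul_le_mul_of_nonneg_right hsum (sub_nonneg.mpr hab)
    _ = (n+1) * b ^ n * (b - a) := by ring

lemma sum_pow_ge (M k : ℕ) :
    ((M:ℝ) ^ (k+1)) / (k+1) ≤ ∑ t ∈ Finset.Icc 1 M, (t:ℝ) ^ k := by
  induction M with
  | zero => simp
  | succ M ih =>
    rw [Finset.sum_Icc_succ_top (by omega)]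
    have hk : (0:ℝ) < (k:ℝ)+1 := by positivity
    have key := pow_succ_sub_pow_succ_le (M:ℝ) ((M:ℝ)+1) (by positivity) (by linarith) k
    rw [div_le_iff₀ hk] at ih ⊢
    push_cast
    nlinarith [key, pow_nonneg (by positivity : (0:ℝ) ≤ (M:ℝ)+1) k]

lemma cesaro_main (m : ℕ) (hm : 1 ≤ m) (k' : ℕ) : ∀ N : ℕ, m ≤ N →
    ((N - m + 1 : ℕ) : ℝ) ^ k' / ((N:ℝ) ^ (k'+1) * (Nat.factorial k')) ≤
      cesaro^[k'+1] (fun i => if i = m then (1:ℝ) else 0) N := by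
  induction k' with
  | zero =>
    intro N hmN
    have hN : 1 ≤ N := hm.trans hmN
    simp only [zero_add, Function.iterate_one, pow_zero, pow_one, Nat.factorial_zero,
      Nat.cast_one, mul_one, cesaro]
    have : (∑ i ∈ Finset.Icc 1 N, if i = m then (1:ℝ) else 0) = 1 := by
      rw [Finset.sum_ite_eq' (Finset.Icc 1 N) m (fun _ => (1:ℝ))]
      simp [Finset.mem_Icc, hm, hmN]
    rw [this]
  | succ k' ih =>
    intro N hmN
    have hN : 1 ≤ N := hm.trans hmN
    have hN0 : (0:ℝ) < N := by exact_mod_cast hN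
    rw [Function.iterate_succ_apply']
    unfold cesaro
    set a : ℕ → ℝ := fun i => if i = m then (1:ℝ) else 0 with ha
    have hanonneg : ∀ i, 0 ≤ a i := fun i => by by_cases h : i = m <;> simp [ha, h]
    -- step 1: restrict the sum to Icc m N
    have h1 : ∑ j ∈ Finset.Icc m N, (cesaro^[k'+1] a) j ≤
        ∑ j ∈ Finset.Icc 1 N, (cesaro^[k'+1] a) j := by
      apply Finset.sum_le_sum_of_subset_of_nonneg
      · intro x hx; simp only [Finset.mem_Icc] at hx ⊢; omega
      · intro j _ _; exact cesaro_iter_nonneg hanonneg _ j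
    -- step 2: lower bound each term
    have h2 : ∑ j ∈ Finset.Icc m N, ((j - m + 1 : ℕ) : ℝ) ^ k' / ((N:ℝ) ^ (k'+1) * (Nat.factorial k'))
        ≤ ∑ j ∈ Finset.Icc m N, (cesaro^[k'+1] a) j := by
      apply Finset.sum_le_sum
      intro j hj
      obtain ⟨hj1, hj2⟩ := Finset.mem_Icc.mp hj
      refine le_trans ?_ (ih j hj1)
      apply div_le_div_of_nonneg_left (by positivity)
      · have : (0:ℝ) < j := by exact_mod_cast hm.trans hj1
        positivity
      · have hjN : (j:ℝ) ≤ N := by exact_mod_cast hj2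
        have h0j : (0:ℝ) ≤ j := by positivity
        exact mul_le_mul_of_nonneg_right (pow_le_pow_left₀ h0j hjN _) (by positivity)
    -- step 3: reindex and bound the power sum
    have h3 : ∑ j ∈ Finset.Icc m N, ((j - m + 1 : ℕ) : ℝ) ^ k'
        = ∑ t ∈ Finset.Icc 1 (N - m + 1), (t:ℝ) ^ k' := by
      apply Finset.sum_nbij' (fun j => j - m + 1) (fun t => t + m - 1)
      · intro j hj; simp only [Finset.mem_Icc] at hj ⊢; omega
      · intro t ht; simp only [Finset.mem_Icc] at ht ⊢; omega
      · intro j hj; simp only [Finset.mem_Icc] at hj; omega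
      · intro t ht; simp only [Finset.mem_Icc] at ht; omega
      · intro j _; rfl
    have h4 := sum_pow_ge (N - m + 1) k'
    -- combine
    have hfac : (0:ℝ) < (Nat.factorial k' : ℝ) := by exact_mod_cast Nat.factorial_pos k'
    have hk1 : (0:ℝ) < (k':ℝ) + 1 := by positivity
    have hD : (0:ℝ) < (N:ℝ) ^ (k'+1) * (Nat.factorial k') := by positivity
    have hchain : ((N - m + 1 : ℕ) : ℝ) ^ (k'+1) / ((k':ℝ)+1) / ((N:ℝ) ^ (k'+1) * (Nat.factorial k'))
        ≤ ∑ j ∈ Finset.Icc 1 N, (cesaro^[k'+1] a) j := by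
      refine le_trans ?_ (le_trans h2 h1)
      rw [← Finset.sum_div, h3]
      gcongr
    have heq : ((N - m + 1 : ℕ) : ℝ) ^ (k'+1) / ((N:ℝ) ^ (k'+1+1) * (Nat.factorial (k'+1)))
        = (((N - m + 1 : ℕ) : ℝ) ^ (k'+1) / ((k':ℝ)+1) / ((N:ℝ) ^ (k'+1) * (Nat.factorial k'))) / N := by
      have hden : ((N:ℝ) ^ (k'+1+1) * (Nat.factorial (k'+1)))
          = ((k':ℝ)+1) * (((N:ℝ)^(k'+1) * (Nat.factorial k')) * N) := by
        rw [Nat.factorial_succ]; push_cast; ring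
      rw [hden, div_div, div_div]
    rw [heq]
    exact div_le_div_of_nonneg_right hchain hN0.le

/-- For all `k, n, λ ≥ 1` and every `i` with `1 ≤ i ≤ λ`:
`T^k_{(n+λ, n+i)} ≥ (λ + 1 − i)^{k−1} / ((n+λ)^k · (k−1)!)`. -/
theorem cesaroEntry_lower_bound (k n l i : ℕ) (hk : 1 ≤ k) (hn : 1 ≤ n) (hl : 1 ≤ l)
    (hi1 : 1 ≤ i) (hil : i ≤ l) :
    ((l + 1 - i : ℕ) : ℝ) ^ (k - 1) / (((n + l : ℕ) : ℝ) ^ k * (Nat.factorial (k - 1))) ≤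
      cesaroEntry k (n + l) (n + i) := by
  obtain ⟨k', rfl⟩ : ∃ k', k = k' + 1 := ⟨k - 1, by omega⟩
  have h := cesaro_main (n + i) (by omega) k' (n + l) (by omega)
  have h1 : (n + l) - (n + i) + 1 = l + 1 - i := by omega
  have h2 : k' + 1 - 1 = k' := by omega
  rw [h1] at h
  rw [h2]
  exact h
end

section
/- Let W be a separable, metrizable, locally convex topological vector space over ℝ and let A ⊆ W be an arbitrary subset. Let θ_1, …, θ_ρ ∈ A be ρ given terms (possibly ρ = 0), let x ∈ conv(A), let U be a neighborhood of x in W, and let k ≥ 1. Then there exist a natural number n > ρ and terms θ_{ρ+1}, …, θ_n ∈ A such that every sequence θ' ∈ A^ℕ with θ'_i = θ_i for i = 1, …, n satisfies [T^k(θ')]_n ∈ U. -/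
open Filter Finset Topology


/-- The Cesàro operator on sequences in a real vector space (indexed from 1; index 0 is
unused): `[T(θ)]_n = (θ_1 + ⋯ + θ_n)/n`. -/
noncomputable def cesaroV {V : Type*} [AddCommGroup V] [Module ℝ V] (θ : ℕ → V) : ℕ → V :=
  fun n => (n : ℝ)⁻¹ • ∑ i ∈ Finset.Icc 1 n, θ i

section Aux

variable {W : Type*} [AddCommGroup W] [Module ℝ W] [TopologicalSpace W]
  [IsTopologicalAddGroup W] [ContinuousSMul ℝ W]

lemma inv_smul_const_tendsto (P : W) :
    Tendsto (fun n : ℕ => (n : ℝ)⁻¹ • P) atTop (𝓝 0) := by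
  have h : Tendsto (fun n : ℕ => (n : ℝ)⁻¹) atTop (𝓝 0) :=
    tendsto_inv_atTop_zero.comp tendsto_natCast_atTop_atTop
  simpa using h.smul_const P

lemma inv_smul_finite_tendsto {q : ℕ} (R : ℕ → W) (s : ℕ → ℕ) (hs : ∀ n, s n < q) :
    Tendsto (fun n : ℕ => (n : ℝ)⁻¹ • R (s n)) atTop (𝓝 0) := by
  rw [Filter.tendsto_def]
  intro V hV
  have h1 : ∀ j ∈ Finset.range q, ∀ᶠ n : ℕ in atTop, (n : ℝ)⁻¹ • R j ∈ V :=
    fun j _ => (inv_smul_const_tendsto (R j)).eventually_mem hV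
  have h2 := (Filter.eventually_all_finset (Finset.range q)).mpr h1
  exact h2.mono fun n hn => hn (s n) (Finset.mem_range.mpr (hs n))

variable [LocallyConvexSpace ℝ W]

lemma cesaro_tendsto_zero {f : ℕ → W} (hf : Tendsto f atTop (𝓝 0)) :
    Tendsto (fun n : ℕ => (n : ℝ)⁻¹ • ∑ i ∈ Finset.Ioc 0 n, f i) atTop (𝓝 0) := by
  rw [Filter.tendsto_def]
  intro V hV
  obtain ⟨D, hD, hDV⟩ := exists_nhds_zero_half hV
  obtain ⟨C, ⟨hC, hCb, hCc⟩, hCD⟩ := (nhds_hasBasis_absConvex ℝ W).mem_iff.mp hD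
  obtain ⟨N, hN⟩ := Filter.eventually_atTop.mp (hf.eventually_mem hC)
  have h1 : ∀ᶠ n : ℕ in atTop, (n : ℝ)⁻¹ • ∑ i ∈ Finset.Ioc 0 N, f i ∈ C :=
    (inv_smul_const_tendsto _).eventually_mem hC
  have key : ∀ᶠ n : ℕ in atTop, (n : ℝ)⁻¹ • ∑ i ∈ Finset.Ioc 0 n, f i ∈ V := by
    filter_upwards [h1, Filter.eventually_ge_atTop (N + 1)] with n hn1 hn2
    have hNn : N ≤ n := Nat.le_of_succ_le hn2
    have hsub : 0 < n - N := Nat.sub_pos_of_lt hn2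
    rw [← Finset.sum_Ioc_consecutive _ (Nat.zero_le N) hNn, smul_add]
    refine hDV _ (hCD hn1) _ (hCD ?_)
    have hcard : (Finset.Ioc N n).card = n - N := by simp
    have havg : ((n - N : ℕ) : ℝ)⁻¹ • ∑ i ∈ Finset.Ioc N n, f i ∈ C := by
      rw [Finset.smul_sum]
      refine hCc.sum_mem (fun i _ => by positivity) ?_
        (fun i hi => hN i (le_of_lt (Finset.mem_Ioc.mp hi).1))
      rw [Finset.sum_const, hcard, nsmul_eq_mul, mul_inv_cancel₀]
      exact_mod_cast hsub.ne'
    have hrw : (n : ℝ)⁻¹ • ∑ i ∈ Finset.Ioc N n, f i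
        = (((n - N : ℕ) : ℝ) / (n : ℝ)) • (((n - N : ℕ) : ℝ)⁻¹ • ∑ i ∈ Finset.Ioc N n, f i) := by
      rw [smul_smul]
      have h2 : ((n - N : ℕ) : ℝ) ≠ 0 := by exact_mod_cast hsub.ne'
      have h3 : ((n : ℕ) : ℝ) ≠ 0 := by
        have : 0 < n := lt_of_lt_of_le (Nat.succ_pos N) hn2
        exact_mod_cast this.ne'
      rw [div_mul_eq_mul_div, mul_inv_cancel₀ h2, one_div]
    rw [hrw]
    refine hCb.smul_mem ?_ havg
    have hn0 : (0:ℝ) < (n:ℝ) := by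
      have : 0 < n := lt_of_lt_of_le (Nat.succ_pos N) hn2
      exact_mod_cast this
    rw [Real.norm_eq_abs, abs_of_nonneg (by positivity), div_le_one hn0]
    exact_mod_cast Nat.sub_le n N
  exact key


lemma cesaro_tendsto {f : ℕ → W} {x : W} (hf : Tendsto f atTop (𝓝 x)) :
    Tendsto (cesaroV f) atTop (𝓝 x) := by
  have h0 : Tendsto (fun n => f n - x) atTop (𝓝 0) := by
    simpa using hf.sub_const x
  have h1 := cesaro_tendsto_zero h0
  have heq : ∀ᶠ n : ℕ in atTop,
      (n : ℝ)⁻¹ • ∑ i ∈ Finset.Ioc 0 n, (f i - x) = cesaroV f n - x := by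
    filter_upwards [Filter.eventually_ge_atTop 1] with n hn
    have hn0 : ((n : ℕ) : ℝ) ≠ 0 := by
      have : 0 < n := hn
      exact_mod_cast this.ne'
    rw [Finset.sum_sub_distrib, smul_sub, Finset.sum_const, Nat.card_Ioc, Nat.sub_zero]
    rw [cesaroV, ← Finset.Icc_add_one_left_eq_Ioc 0 n]
    congr 1
    rw [← Nat.cast_smul_eq_nsmul ℝ, smul_smul, inv_mul_cancel₀ hn0, one_smul]
  have h2 : Tendsto (fun n => cesaroV f n - x) atTop (𝓝 0) := h1.congr' heq
  have h3 := h2.add_const x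
  simpa using h3

lemma cesaro_iter_tendsto {f : ℕ → W} {x : W} (hf : Tendsto f atTop (𝓝 x)) (k : ℕ) :
    Tendsto (cesaroV^[k] f) atTop (𝓝 x) := by
  induction k with
  | zero => simpa using hf
  | succ k ih =>
    rw [Function.iterate_succ_apply']
    exact cesaro_tendsto ih

lemma cesaro_prefix_dep (k : ℕ) (hk : 1 ≤ k) :
    ∀ (θ' η : ℕ → W) (n : ℕ), (∀ i, 1 ≤ i → i ≤ n → θ' i = η i) →
      cesaroV^[k] θ' n = cesaroV^[k] η n := by
  induction k with
  | zero => omega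
  | succ k ih =>
    intro θ' η n h
    rw [Function.iterate_succ_apply, Function.iterate_succ_apply]
    rcases Nat.eq_zero_or_pos k with hk0 | hk0
    · subst hk0
      simp only [Function.iterate_zero, id_eq]
      unfold cesaroV
      congr 1
      exact Finset.sum_congr rfl fun i hi => by
        obtain ⟨h1, h2⟩ := Finset.mem_Icc.mp hi; exact h i h1 h2
    · refine ih hk0 (cesaroV θ') (cesaroV η) n fun i h1 h2 => ?_
      unfold cesaroV
      congr 1
      exact Finset.sum_congr rfl fun i' hi' => by
        obtain ⟨h1', h2'⟩ := Finset.mem_Icc.mp hi'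
        exact h i' h1' (le_trans h2' h2)

end Aux

section Periodic

variable {W : Type*} [AddCommGroup W] [Module ℝ W]

lemma shift_block {q : ℕ} {f : ℕ → W} (hf : ∀ r, f (r + q) = f r) :
    ∀ m, ∑ j ∈ Finset.range q, f (m + j) = ∑ j ∈ Finset.range q, f j := by
  intro m
  induction m with
  | zero => simp
  | succ m ih =>
    have h1 : ∑ j ∈ Finset.range (q + 1), f (m + j)
        = (∑ j ∈ Finset.range q, f (m + j)) + f (m + q) := Finset.sum_range_succ _ q
    have h2 : ∑ j ∈ Finset.range (q + 1), f (m + j)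
        = (∑ j ∈ Finset.range q, f (m + (j + 1))) + f (m + 0) := Finset.sum_range_succ' _ q
    rw [h1, hf m, Nat.add_zero] at h2
    have key : ∑ j ∈ Finset.range q, f (m + (j + 1)) = ∑ j ∈ Finset.range q, f (m + j) :=
      add_right_cancel h2.symm
    calc ∑ j ∈ Finset.range q, f (m + 1 + j)
        = ∑ j ∈ Finset.range q, f (m + (j + 1)) :=
          Finset.sum_congr rfl fun j _ => congrArg f (by omega)
      _ = ∑ j ∈ Finset.range q, f (m + j) := key
      _ = ∑ j ∈ Finset.range q, f j := ih

lemma getD_sum_range (L : List W) :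
    ∑ j ∈ Finset.range L.length, L.getD j 0 = L.sum := by
  induction L with
  | nil => simp
  | cons a L ih =>
    rw [List.length_cons, Finset.sum_range_succ']
    simp only [List.getD_cons_succ, List.getD_cons_zero, List.sum_cons, ih, add_comm]

lemma period_decomp {q : ℕ} {f : ℕ → W} (hf : ∀ r, f (r + q) = f r) (S : W)
    (hblock : ∑ r ∈ Finset.range q, f r = S) :
    ∀ d s : ℕ, ∑ r ∈ Finset.range (q * d + s), f r = d • S + ∑ r ∈ Finset.range s, f r := by
  intro d
  induction d with
  | zero => simp
  | succ d ih =>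
    intro s
    have h1 : q * (d + 1) + s = (q * d + s) + q := by ring
    rw [h1, Finset.sum_range_add, ih s, shift_block hf (q * d + s), hblock, succ_nsmul]
    abel

end Periodic

set_option maxHeartbeats 1000000

/-- Lemma 3.3: given finitely many terms `θ_1, …, θ_ρ ∈ A`, a target `x ∈ conv(A)`, a
neighborhood `U` of `x` and `k ≥ 1`, there exist `n > ρ` and terms `θ_{ρ+1}, …, θ_n ∈ A`
such that every sequence `θ' ∈ A^ℕ` starting with `θ_1, …, θ_n` satisfies
`[T^k(θ')]_n ∈ U`. -/
theorem cesaro_finite_approximation (W : Type*) [AddCommGroup W] [Module ℝ W]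
    [TopologicalSpace W] [IsTopologicalAddGroup W] [ContinuousSMul ℝ W]
    [LocallyConvexSpace ℝ W] [TopologicalSpace.MetrizableSpace W]
    [TopologicalSpace.SeparableSpace W]
    (A : Set W) (ρ : ℕ) (θ : ℕ → W) (hθ : ∀ i, 1 ≤ i → i ≤ ρ → θ i ∈ A)
    (x : W) (hx : x ∈ convexHull ℝ A) (U : Set W) (hU : U ∈ nhds x)
    (k : ℕ) (hk : 1 ≤ k) :
    ∃ n, ρ < n ∧ ∃ η : ℕ → W,
      (∀ i, 1 ≤ i → i ≤ n → η i ∈ A) ∧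
      (∀ i, 1 ≤ i → i ≤ ρ → η i = θ i) ∧
      ∀ θ' : ℕ → W, (∀ i, 1 ≤ i → θ' i ∈ A) → (∀ i, 1 ≤ i → i ≤ n → θ' i = η i) →
        cesaroV^[k] θ' n ∈ U := by
  rw [_root_.convexHull_eq] at hx
  obtain ⟨ι, t, w, z, hw0, hw1, hzA, hcm⟩ := hx
  have hx' : ∑ j ∈ t, w j • z j = x := by
    rw [← hcm, Finset.centerMass, hw1, inv_one, one_smul]
  set V := interior U with hVdef
  have hVo : IsOpen V := isOpen_interior
  have hVx : x ∈ V := mem_interior_iff_mem_nhds.mpr hU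
  have hφ : Continuous fun c : ↥t → ℝ => x + ∑ j ∈ t.attach, c j • z j :=
    continuous_const.add
      (continuous_finset_sum _ fun j _ => (continuous_apply j).smul continuous_const)
  have h0 : (fun c : ↥t → ℝ => x + ∑ j ∈ t.attach, c j • z j) 0 = x := by simp
  have hpre : (fun c : ↥t → ℝ => x + ∑ j ∈ t.attach, c j • z j) ⁻¹' V ∈ 𝓝 (0 : ↥t → ℝ) :=
    hφ.continuousAt.preimage_mem_nhds (by simpa using hVo.mem_nhds hVx)
  obtain ⟨ε, hε, hball⟩ := Metric.mem_nhds_iff.mp hpre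
  -- choose sizes
  set Q : ℕ := ⌈(1 + t.card) / ε⌉₊ + 1 with hQdef
  set N : ℕ := Q + t.card with hNdef
  set p : ι → ℕ := fun j => ⌊w j * N⌋₊ with hpdef
  set q : ℕ := ∑ j ∈ t, p j with hqdef
  have hp_le : ∀ j ∈ t, (p j : ℝ) ≤ w j * N :=
    fun j hj => Nat.floor_le (mul_nonneg (hw0 j hj) (Nat.cast_nonneg N))
  have hp_gt : ∀ j, w j * N < p j + 1 := fun j => Nat.lt_floor_add_one _
  have hqN : (q : ℝ) ≤ N := by
    rw [hqdef, Nat.cast_sum]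
    calc ∑ j ∈ t, (p j : ℝ) ≤ ∑ j ∈ t, w j * N := Finset.sum_le_sum hp_le
      _ = (N : ℝ) := by rw [← Finset.sum_mul, hw1, one_mul]
  have ht_ne : t.Nonempty := by
    rcases Finset.eq_empty_or_nonempty t with h | h
    · exfalso; rw [h, Finset.sum_empty] at hw1; exact one_ne_zero hw1.symm
    · exact h
  have hqlow : (N : ℝ) - t.card < q := by
    have h1 : ∑ j ∈ t, (w j * N - 1) < ∑ j ∈ t, (p j : ℝ) :=
      Finset.sum_lt_sum_of_nonempty ht_ne fun j hj => by linarith [hp_gt j]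
    have h2 : ∑ j ∈ t, (w j * N - 1) = (N : ℝ) - t.card := by
      rw [Finset.sum_sub_distrib, ← Finset.sum_mul, hw1, one_mul, Finset.sum_const, nsmul_eq_mul,
        mul_one]
    rw [hqdef, Nat.cast_sum]
    linarith
  have hQq : (Q : ℝ) < q := by
    have : (N : ℝ) - t.card = Q := by rw [hNdef]; push_cast; ring
    linarith
  have hq0 : 0 < q := by
    have : Q < q := by exact_mod_cast hQq
    omega
  have hq' : (0 : ℝ) < q := by exact_mod_cast hq0
  have hεq : 1 + (t.card : ℝ) < ε * q := by
    have h1 : (1 + t.card) / ε ≤ (⌈(1 + t.card) / ε⌉₊ : ℝ) := Nat.le_ceil _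
    have h2 : (1 + (t.card : ℝ)) / ε < q := by
      have : ((⌈(1 + t.card) / ε⌉₊ : ℝ)) + 1 = (Q : ℝ) := by rw [hQdef]; push_cast; ring
      push_cast at h1 ⊢
      linarith
    calc 1 + (t.card : ℝ) = (1 + (t.card : ℝ)) / ε * ε := by field_simp
      _ < q * ε := by
          apply mul_lt_mul_of_pos_right h2 hε
      _ = ε * q := mul_comm _ _
  have hw_le1 : ∀ j ∈ t, w j ≤ 1 := fun j hj => hw1 ▸ Finset.single_le_sum hw0 hj
  have hcoef : ∀ j ∈ t, |(p j : ℝ) / q - w j| < ε := by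
    intro j hj
    have key : |(p j : ℝ) - w j * q| < ε * q := by
      have t1 : |(p j : ℝ) - w j * q| ≤ |(p j : ℝ) - w j * N| + |w j * N - w j * q| :=
        abs_sub_le _ _ _
      have t2 : |(p j : ℝ) - w j * N| ≤ 1 :=
        abs_le.mpr ⟨by linarith [hp_gt j], by linarith [hp_le j hj]⟩
      have t3 : |w j * N - w j * q| = w j * ((N : ℝ) - q) := by
        rw [← mul_sub, abs_of_nonneg (mul_nonneg (hw0 j hj) (by linarith))]
      have t4 : w j * ((N : ℝ) - q) ≤ 1 * ((N : ℝ) - q) :=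
        mul_le_mul_of_nonneg_right (hw_le1 j hj) (by linarith)
      have t5 : (N : ℝ) - q < t.card := by linarith
      linarith
    have heq : (p j : ℝ) / q - w j = ((p j : ℝ) - w j * q) / q := by field_simp
    rw [heq, abs_div, abs_of_nonneg (le_of_lt hq'), div_lt_iff₀ hq']
    linarith [key]
  -- the approximating coefficients
  set c : ↥t → ℝ := fun j => (p j : ℝ) / q - w j with hcdef
  have hcball : c ∈ Metric.ball (0 : ↥t → ℝ) ε := by
    rw [Metric.mem_ball, dist_zero_right, pi_norm_lt_iff hε]
    intro j
    rw [Real.norm_eq_abs]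
    exact hcoef j j.2
  have hyV : x + ∑ j ∈ t.attach, c j • z j ∈ V := hball hcball
  have hy_eq : x + ∑ j ∈ t.attach, c j • z j = (q : ℝ)⁻¹ • ∑ j ∈ t, p j • z j := by
    have hterm : ∀ j : ↥t, w (j : ι) • z (j : ι) + c j • z (j : ι)
        = (q : ℝ)⁻¹ • (p (j : ι) • z (j : ι)) := by
      intro j
      rw [← add_smul, hcdef]
      have : w (j : ι) + ((p (j : ι) : ℝ) / q - w (j : ι)) = (q : ℝ)⁻¹ * (p (j : ι) : ℝ) := by
        field_simp
        ring
      rw [this, mul_smul, Nat.cast_smul_eq_nsmul]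
    calc x + ∑ j ∈ t.attach, c j • z j
        = ∑ j ∈ t.attach, w (j : ι) • z (j : ι) + ∑ j ∈ t.attach, c j • z (j : ι) := by
          rw [← hx', ← Finset.sum_attach t fun j => w j • z j]
      _ = ∑ j ∈ t.attach, (w (j : ι) • z (j : ι) + c j • z (j : ι)) := by
          rw [Finset.sum_add_distrib]
      _ = ∑ j ∈ t.attach, (q : ℝ)⁻¹ • (p (j : ι) • z (j : ι)) := by
          exact Finset.sum_congr rfl fun j _ => hterm j
      _ = (q : ℝ)⁻¹ • ∑ j ∈ t, p j • z j := by
          rw [← Finset.smul_sum, Finset.sum_attach t fun j => p j • z j]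
  -- the periodic list
  set L : List W := t.toList.flatMap (fun j => List.replicate (p j) (z j)) with hLdef
  have hLlen : L.length = q := by
    rw [hLdef, List.length_flatMap]
    have : t.toList.map (List.length ∘ fun j => List.replicate (p j) (z j)) = t.toList.map p := by
      apply List.map_congr_left
      intro j _
      simp
    simp only [Function.comp_def] at this
    rw [this, Finset.sum_map_toList]
  have hLsum : L.sum = ∑ j ∈ t, p j • z j := by
    rw [hLdef, List.flatMap, List.sum_flatten, List.map_map]
    have : t.toList.map (List.sum ∘ fun j => List.replicate (p j) (z j))
        = t.toList.map fun j => p j • z j := by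
      apply List.map_congr_left
      intro j _
      simp
    rw [this, Finset.sum_map_toList]
  have hLA : ∀ v ∈ L, v ∈ A := by
    intro v hv
    rw [hLdef, List.mem_flatMap] at hv
    obtain ⟨j, hj, hv⟩ := hv
    rw [List.eq_of_mem_replicate hv]
    exact hzA j (Finset.mem_toList.mp hj)
  -- the periodic sequence
  set η : ℕ → W := fun i => if i ≤ ρ then θ i else L.getD ((i - ρ - 1) % q) 0 with hηdef
  have hηθ : ∀ i, 1 ≤ i → i ≤ ρ → η i = θ i := fun i _ h2 => by simp [hηdef, h2]
  have hηA : ∀ i, 1 ≤ i → η i ∈ A := by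
    intro i h1
    by_cases h : i ≤ ρ
    · rw [hηθ i h1 h]; exact hθ i h1 h
    · have hlt : (i - ρ - 1) % q < L.length := by rw [hLlen]; exact Nat.mod_lt _ hq0
      simp only [hηdef, if_neg h]
      rw [List.getD_eq_getElem _ _ hlt]
      exact hLA _ (List.getElem_mem hlt)
  set f : ℕ → W := fun r => L.getD (r % q) 0 with hfdef
  have hper : ∀ r, f (r + q) = f r := fun r => by simp [hfdef, Nat.add_mod_right]
  have hblock : ∑ r ∈ Finset.range q, f r = L.sum := by
    have h1 : ∀ r ∈ Finset.range q, f r = L.getD r 0 := fun r hr => by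
      simp [hfdef, Nat.mod_eq_of_lt (Finset.mem_range.mp hr)]
    rw [Finset.sum_congr rfl h1, ← hLlen]
    exact getD_sum_range L
  set P : W := ∑ i ∈ Finset.Ioc 0 ρ, θ i with hPdef
  set y : W := (q : ℝ)⁻¹ • L.sum with hydef
  have hces : ∀ n, ρ ≤ n → cesaroV η n
      = ((n : ℝ)⁻¹ • P + ((((n - ρ) / q : ℕ) : ℝ) * (n : ℝ)⁻¹) • L.sum)
        + (n : ℝ)⁻¹ • ∑ r ∈ Finset.range ((n - ρ) % q), f r := by
    intro n hn
    have hsplit : ∑ i ∈ Finset.Icc 1 n, η i = P + ∑ r ∈ Finset.range (n - ρ), f r := by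
      rw [show Finset.Icc 1 n = Finset.Ioc 0 n by rw [← Finset.Icc_add_one_left_eq_Ioc]; rfl, ← Finset.sum_Ioc_consecutive _ (Nat.zero_le ρ) hn]
      congr 1
      · exact Finset.sum_congr rfl fun i hi =>
          hηθ i (Finset.mem_Ioc.mp hi).1 (Finset.mem_Ioc.mp hi).2
      · rw [← Finset.Ico_add_one_add_one_eq_Ioc, Finset.sum_Ico_eq_sum_range]
        have hlen : n + 1 - (ρ + 1) = n - ρ := by omega
        rw [hlen]
        refine Finset.sum_congr rfl fun r hr => ?_
        have h1 : ¬ (ρ + 1 + r ≤ ρ) := by omega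
        simp only [hηdef, hfdef, if_neg h1]
        have h2 : ρ + 1 + r - ρ - 1 = r := by omega
        rw [h2]
    have hdecomp : ∑ r ∈ Finset.range (n - ρ), f r
        = ((n - ρ) / q) • L.sum + ∑ r ∈ Finset.range ((n - ρ) % q), f r := by
      conv_lhs => rw [← Nat.div_add_mod (n - ρ) q]
      exact period_decomp hper L.sum hblock _ _
    simp only [cesaroV]
    rw [hsplit, hdecomp, smul_add, smul_add, ← Nat.cast_smul_eq_nsmul ℝ ((n - ρ) / q) L.sum,
      smul_smul, mul_comm ((n : ℝ)⁻¹) _, ← add_assoc]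
  have h1 : Tendsto (fun n : ℕ => (n : ℝ)⁻¹ • P) atTop (𝓝 0) := inv_smul_const_tendsto P
  have h3 : Tendsto (fun n : ℕ => (n : ℝ)⁻¹ • ∑ r ∈ Finset.range ((n - ρ) % q), f r)
      atTop (𝓝 0) :=
    inv_smul_finite_tendsto (fun s => ∑ r ∈ Finset.range s, f r) (fun n => (n - ρ) % q)
      (fun n => Nat.mod_lt _ hq0)
  have hinv : Tendsto (fun n : ℕ => (n : ℝ)⁻¹) atTop (𝓝 0) :=
    tendsto_inv_atTop_zero.comp tendsto_natCast_atTop_atTop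
  have hd : Tendsto (fun n : ℕ => (((n - ρ) / q : ℕ) : ℝ) * (n : ℝ)⁻¹) atTop
      (𝓝 ((q : ℝ)⁻¹)) := by
    have hlow : Tendsto (fun n : ℕ => (q : ℝ)⁻¹ - ((ρ : ℝ) + q) / q * (n : ℝ)⁻¹) atTop
        (𝓝 ((q : ℝ)⁻¹)) := by
      have hh := Tendsto.const_sub ((q : ℝ)⁻¹) (hinv.const_mul (((ρ : ℝ) + q) / q))
      simpa using hh
    refine tendsto_of_tendsto_of_tendsto_of_le_of_le' hlow tendsto_const_nhds ?_ ?_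
    · filter_upwards [Filter.eventually_ge_atTop (ρ + 1)] with n hn
      have hmod := Nat.mod_lt (n - ρ) hq0
      have hdm := Nat.div_add_mod (n - ρ) q
      have hn0 : (0 : ℝ) < n := by
        have : 0 < n := by omega
        exact_mod_cast this
      have hkey : (n : ℝ) - ρ - q ≤ (q : ℝ) * (((n - ρ) / q : ℕ) : ℝ) := by
        have h2 : n - ρ ≤ q * ((n - ρ) / q) + q := by omega
        have h2' := (Nat.cast_le (α := ℝ)).mpr h2
        have h3 : ((n - ρ : ℕ) : ℝ) = (n : ℝ) - ρ := by
          have hρn : ρ ≤ n := by omega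
          exact Nat.cast_sub hρn
        push_cast at h2'
        rw [h3] at h2'
        linarith
      have hab : (0 : ℝ) ≤ (n : ℝ)⁻¹ * (q : ℝ)⁻¹ := by positivity
      have hmul := mul_le_mul_of_nonneg_right hkey hab
      have e1 : (q : ℝ) * (((n - ρ) / q : ℕ) : ℝ) * ((n : ℝ)⁻¹ * (q : ℝ)⁻¹)
          = (((n - ρ) / q : ℕ) : ℝ) * (n : ℝ)⁻¹ := by
        field_simp
      have e2 : ((n : ℝ) - ρ - q) * ((n : ℝ)⁻¹ * (q : ℝ)⁻¹)
          = (q : ℝ)⁻¹ - ((ρ : ℝ) + q) / q * (n : ℝ)⁻¹ := by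
        field_simp
        ring
      linarith [hmul]
    · filter_upwards [Filter.eventually_ge_atTop 1] with n hn
      have hdm := Nat.div_add_mod (n - ρ) q
      have hn0 : (0 : ℝ) < n := by
        have : 0 < n := by omega
        exact_mod_cast this
      have h2 : q * ((n - ρ) / q) ≤ n := by omega
      have h2' := (Nat.cast_le (α := ℝ)).mpr h2
      push_cast at h2'
      have hab : (0 : ℝ) ≤ (n : ℝ)⁻¹ * (q : ℝ)⁻¹ := by positivity
      have hmul := mul_le_mul_of_nonneg_right h2' hab
      have e1 : (q : ℝ) * (((n - ρ) / q : ℕ) : ℝ) * ((n : ℝ)⁻¹ * (q : ℝ)⁻¹)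
          = (((n - ρ) / q : ℕ) : ℝ) * (n : ℝ)⁻¹ := by
        field_simp
      have e3 : (n : ℝ) * ((n : ℝ)⁻¹ * (q : ℝ)⁻¹) = (q : ℝ)⁻¹ := by
        field_simp
      linarith [hmul]
  have h2 : Tendsto (fun n : ℕ => ((((n - ρ) / q : ℕ) : ℝ) * (n : ℝ)⁻¹) • L.sum) atTop
      (𝓝 y) := by
    rw [hydef]
    exact hd.smul_const L.sum
  have hlim : Tendsto (cesaroV η) atTop (𝓝 y) := by
    have hsum := (h1.add h2).add h3
    rw [zero_add, add_zero] at hsum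
    refine Tendsto.congr' ?_ hsum
    filter_upwards [Filter.eventually_ge_atTop ρ] with n hn
    exact (hces n hn).symm
  obtain ⟨k', rfl⟩ : ∃ k', k = k' + 1 := ⟨k - 1, by omega⟩
  have hiter : Tendsto (cesaroV^[k' + 1] η) atTop (𝓝 y) := by
    rw [show cesaroV^[k' + 1] η = cesaroV^[k'] (cesaroV η) from Function.iterate_succ_apply _ _ _]
    exact cesaro_iter_tendsto hlim k'
  have hyV' : y ∈ V := by
    rw [hydef, hLsum, ← hy_eq]
    exact hyV
  have hev := hiter.eventually_mem (hVo.mem_nhds hyV')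
  obtain ⟨N₀, hN₀⟩ := Filter.eventually_atTop.mp hev
  refine ⟨max N₀ (ρ + 1), ?_, η, fun i hi _ => hηA i hi, hηθ, ?_⟩
  · have := le_max_right N₀ (ρ + 1)
    omega
  · intro θ' _ hagree
    have heq := cesaro_prefix_dep (k' + 1) (Nat.succ_le_succ (Nat.zero_le _)) θ' η _ hagree
    rw [heq]
    exact interior_subset (hN₀ _ (le_max_left _ _))
end
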